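/- Under the assumptions of the previous statement, suppose additionally that h is L_h-Lipschitz and convex, and that V is a minimizer over the tangent space T_X M of g(V) = ⟨∇f(X),V⟩ + (1/(2t))‖V‖² + h(X+V). Then for every α with 0 < α ≤ min{1, 1/(2(M₂G + LM₁²/2 + L_h M₂) t)}, one has F(R_X(αV)) − F(X) ≤ −(α/(2t))‖V‖², where F = f + h. -/

import Mathlib

theorem descent_aux {E : Type*} [NormedAddCommGroup E] [InnerProductSpace ℝ E]
    [CompleteSpace E]
    (f : E → ℝ) (gf : E → E) (hgf : ∀ x, HasGradientAt f (gf x) x)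
    (L : ℝ) (hL : ∀ x y, ‖gf x - gf y‖ ≤ L * ‖x - y‖)
    (x y : E) : f y ≤ f x + inner ℝ (gf x) (y - x) + L / 2 * ‖y - x‖ ^ 2 := by
  set d := y - x with hd
  set φ : ℝ → ℝ := fun τ => f (x + τ • d) - τ * inner ℝ (gf x) d - L / 2 * τ ^ 2 * ‖d‖ ^ 2 with hφ
  have hline : ∀ τ : ℝ, HasDerivAt (fun τ : ℝ => x + τ • d) d τ := by
    intro τ
    simpa using ((hasDerivAt_id τ).smul_const d).const_add x
  have hcomp : ∀ τ : ℝ, HasDerivAt (fun τ => f (x + τ • d))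
      (inner ℝ (gf (x + τ • d)) d : ℝ) τ := by
    intro τ
    have := (hgf (x + τ • d)).hasFDerivAt.comp_hasDerivAt τ (hline τ)
    exact this
  have hφ' : ∀ τ : ℝ, HasDerivAt φ
      ((inner ℝ (gf (x + τ • d)) d : ℝ) - inner ℝ (gf x) d - L * τ * ‖d‖ ^ 2) τ := by
    intro τ
    have h1 : HasDerivAt (fun τ : ℝ => τ * (inner ℝ (gf x) d : ℝ)) (inner ℝ (gf x) d) τ := by
      simpa using (hasDerivAt_id τ).mul_const (inner ℝ (gf x) d : ℝ)
    have h2 : HasDerivAt (fun τ : ℝ => L / 2 * τ ^ 2 * ‖d‖ ^ 2) (L * τ * ‖d‖ ^ 2) τ := by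
      have := ((hasDerivAt_pow 2 τ).const_mul (L / 2)).mul_const (‖d‖ ^ 2)
      rw [show L * τ * ‖d‖ ^ 2 = L / 2 * (((2:ℕ):ℝ) * τ ^ (2 - 1)) * ‖d‖ ^ 2 by push_cast; ring]
      exact this
    exact ((hcomp τ).sub h1).sub h2
  have hmono : AntitoneOn φ (Set.Icc (0:ℝ) 1) := by
    apply antitoneOn_of_deriv_nonpos (convex_Icc 0 1)
    · exact fun τ _ => ((hφ' τ).continuousAt).continuousWithinAt
    · exact fun τ _ => ((hφ' τ).differentiableAt).differentiableWithinAt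
    · intro τ hτ
      rw [interior_Icc] at hτ
      rw [(hφ' τ).deriv]
      have h1 : (inner ℝ (gf (x + τ • d)) d : ℝ) - inner ℝ (gf x) d
          = inner ℝ (gf (x + τ • d) - gf x) d := by rw [inner_sub_left]
      have h2 : (inner ℝ (gf (x + τ • d) - gf x) d : ℝ) ≤ ‖gf (x + τ • d) - gf x‖ * ‖d‖ :=
        real_inner_le_norm _ _
      have h3 : ‖gf (x + τ • d) - gf x‖ ≤ L * (τ * ‖d‖) := by
        have := hL (x + τ • d) x
        simpa [norm_smul, abs_of_pos hτ.1] using this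
      nlinarith [norm_nonneg d, mul_le_mul_of_nonneg_right h3 (norm_nonneg d)]
  have := hmono (Set.left_mem_Icc.2 zero_le_one) (Set.right_mem_Icc.2 zero_le_one) zero_le_one
  simp only [hφ] at this
  simp only [one_smul, zero_smul, add_zero] at this
  have hxy : x + d = y := by simp [hd]
  rw [hxy] at this
  linarith

set_option maxHeartbeats 1600000 in
/-- sufficient decrease of `F = f + h` along the retracted direction
`V` obtained from the proximal-gradient subproblem. -/
theorem stmt_6 {n r : ℕ}
    (f h : EuclideanSpace ℝ (Fin n × Fin r) → ℝ)
    (gf : EuclideanSpace ℝ (Fin n × Fin r) → EuclideanSpace ℝ (Fin n × Fin r))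
    (hgf : ∀ x, HasGradientAt f (gf x) x)
    (L : ℝ) (hL0 : 0 < L) (hL : ∀ x y, ‖gf x - gf y‖ ≤ L * ‖x - y‖)
    (Lh : ℝ) (hLh0 : 0 < Lh) (hLh : ∀ x y, |h x - h y| ≤ Lh * ‖x - y‖)
    (hh : ConvexOn ℝ Set.univ h)
    (M : Set (EuclideanSpace ℝ (Fin n × Fin r)))
    (Tang : EuclideanSpace ℝ (Fin n × Fin r) → Submodule ℝ (EuclideanSpace ℝ (Fin n × Fin r)))
    (R : EuclideanSpace ℝ (Fin n × Fin r) → EuclideanSpace ℝ (Fin n × Fin r) →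
      EuclideanSpace ℝ (Fin n × Fin r))
    (M₁ M₂ G : ℝ) (hM₁ : 0 < M₁) (hM₂ : 0 < M₂) (hG0 : 0 < G)
    (hR1 : ∀ X ∈ M, ∀ ξ ∈ Tang X, ‖R X ξ - X‖ ≤ M₁ * ‖ξ‖)
    (hR2 : ∀ X ∈ M, ∀ ξ ∈ Tang X, ‖R X ξ - (X + ξ)‖ ≤ M₂ * ‖ξ‖ ^ 2)
    (hG : ∀ X ∈ M, ‖gf X‖ ≤ G)
    (t : ℝ) (ht : 0 < t)
    (X : EuclideanSpace ℝ (Fin n × Fin r)) (hX : X ∈ M)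
    (g : EuclideanSpace ℝ (Fin n × Fin r) → ℝ)
    (hg : ∀ W, g W = (inner ℝ (gf X) W : ℝ) + (1 / (2 * t)) * ‖W‖ ^ 2 + h (X + W))
    (V : EuclideanSpace ℝ (Fin n × Fin r)) (hVT : V ∈ Tang X)
    (hmin : ∀ W ∈ Tang X, g V ≤ g W) :
    ∀ α : ℝ, 0 < α →
      α ≤ min 1 (1 / (2 * (M₂ * G + L * M₁ ^ 2 / 2 + Lh * M₂) * t)) →
      (f (R X (α • V)) + h (R X (α • V))) - (f X + h X) ≤ -(α / (2 * t)) * ‖V‖ ^ 2 := by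
  intro α hα hαle
  set C : ℝ := M₂ * G + L * M₁ ^ 2 / 2 + Lh * M₂ with hC
  have hC0 : 0 < C := by positivity
  have hα1 : α ≤ 1 := hαle.trans (min_le_left _ _)
  have hα2 : α * (2 * C * t) ≤ 1 := by
    have h2 := hαle.trans (min_le_right _ _)
    rw [le_div_iff₀ (by positivity)] at h2
    exact h2
  -- Key inequality: g's minimality gives strong decrease of the linearized model
  have keyA : (inner ℝ (gf X) V : ℝ) + h (X + V) - h X ≤ -(1 / (2 * t)) * (2 * ‖V‖ ^ 2) := by
    have key : ∀ ε > (0:ℝ),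
        (inner ℝ (gf X) V : ℝ) + h (X + V) - h X ≤ -(1 / (2 * t)) * (2 * ‖V‖ ^ 2) + ε := by
      intro ε hε
      set s : ℝ := min 1 (2 * t * ε / (‖V‖ ^ 2 + 1)) with hs
      have hs0 : 0 < s := lt_min one_pos (by positivity)
      have hs1 : s ≤ 1 := min_le_left _ _
      have hsV : s * (‖V‖ ^ 2 + 1) ≤ 2 * t * ε := by
        have := min_le_right 1 (2 * t * ε / (‖V‖ ^ 2 + 1))
        rw [le_div_iff₀ (by positivity)] at this
        exact this
      have hmem : (1 - s) • V ∈ Tang X := Submodule.smul_mem _ _ hVT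
      have hge := hmin _ hmem
      rw [hg, hg] at hge
      have hns : ‖(1 - s) • V‖ ^ 2 = (1 - s) ^ 2 * ‖V‖ ^ 2 := by
        rw [norm_smul, mul_pow, Real.norm_eq_abs, sq_abs]
      have hin : (inner ℝ (gf X) ((1 - s) • V) : ℝ) = (1 - s) * inner ℝ (gf X) V :=
        real_inner_smul_right _ _ _
      have hcx : h (X + (1 - s) • V) ≤ (1 - s) * h (X + V) + s * h X := by
        have hcomb : (1 - s) • (X + V) + s • X = X + (1 - s) • V := by
          module
        have := hh.2 (Set.mem_univ (X + V)) (Set.mem_univ X)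
          (by linarith : (0:ℝ) ≤ 1 - s) hs0.le (by ring)
        rw [hcomb] at this
        simpa [smul_eq_mul] using this
      rw [hns, hin] at hge
      have ht' : 0 < 2 * t := by linarith
      have hkey : s * ((inner ℝ (gf X) V : ℝ) + h (X + V) - h X + (1 / (2 * t)) * (2 * ‖V‖ ^ 2))
          ≤ s * ε := by
        have e1 : (1 / (2 * t)) * ((1 - s) ^ 2 * ‖V‖ ^ 2) - (1 / (2 * t)) * ‖V‖ ^ 2
            = (1 / (2 * t)) * ((s ^ 2 - 2 * s) * ‖V‖ ^ 2) := by ring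
        have e2 : (1 / (2 * t)) * (s ^ 2 * ‖V‖ ^ 2) ≤ s * ε := by
          rw [div_mul_eq_mul_div, one_mul, div_le_iff₀ ht']
          nlinarith [sq_nonneg s, norm_nonneg V, hs0.le]
        linarith [hge, hcx, e2]
      have := (mul_le_mul_iff_of_pos_left hs0).1 hkey
      linarith
    linarith [le_of_forall_pos_le_add key]
  -- now the main estimate
  set d : EuclideanSpace ℝ (Fin n × Fin r) := α • V with hdd
  have hdT : d ∈ Tang X := Submodule.smul_mem _ _ hVT
  have hnd : ‖d‖ = α * ‖V‖ := by
    rw [hdd, norm_smul, Real.norm_eq_abs, abs_of_pos hα]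
  have r1 : ‖R X d - X‖ ≤ M₁ * (α * ‖V‖) := by
    have := hR1 X hX d hdT; rwa [hnd] at this
  have r2 : ‖R X d - (X + d)‖ ≤ M₂ * (α * ‖V‖) ^ 2 := by
    have := hR2 X hX d hdT; rwa [hnd] at this
  have fb : f (R X d) ≤ f X + inner ℝ (gf X) (R X d - X) + L / 2 * ‖R X d - X‖ ^ 2 :=
    descent_aux f gf hgf L hL X (R X d)
  have hsplit : R X d - X = d + (R X d - (X + d)) := by abel
  have innsplit : (inner ℝ (gf X) (R X d - X) : ℝ)
      = inner ℝ (gf X) d + inner ℝ (gf X) (R X d - (X + d)) := by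
    rw [hsplit, inner_add_right]
  have ib : (inner ℝ (gf X) (R X d - (X + d)) : ℝ) ≤ G * (M₂ * (α * ‖V‖) ^ 2) := by
    refine (real_inner_le_norm _ _).trans ?_
    exact mul_le_mul (hG X hX) r2 (norm_nonneg _) hG0.le
  have lb : L / 2 * ‖R X d - X‖ ^ 2 ≤ L / 2 * (M₁ * (α * ‖V‖)) ^ 2 := by
    have := pow_le_pow_left₀ (norm_nonneg _) r1 2
    nlinarith
  have hb : h (R X d) ≤ h (X + d) + Lh * (M₂ * (α * ‖V‖) ^ 2) := by
    have h1 := hLh (R X d) (X + d)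
    have h2 := abs_le.1 h1
    have h3 : Lh * ‖R X d - (X + d)‖ ≤ Lh * (M₂ * (α * ‖V‖) ^ 2) :=
      mul_le_mul_of_nonneg_left r2 hLh0.le
    linarith [h2.2]
  have hcx2 : h (X + d) ≤ (1 - α) * h X + α * h (X + V) := by
    have hcomb : (1 - α) • X + α • (X + V) = X + d := by
      rw [hdd]; module
    have := hh.2 (Set.mem_univ X) (Set.mem_univ (X + V))
      (by linarith : (0:ℝ) ≤ 1 - α) hα.le (by ring)
    rw [hcomb] at this
    simpa [smul_eq_mul] using this
  have innd : (inner ℝ (gf X) d : ℝ) = α * inner ℝ (gf X) V := real_inner_smul_right _ _ _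
  -- step size bound
  have hCa : C * α * (α * ‖V‖ ^ 2) ≤ (1 / (2 * t)) * (α * ‖V‖ ^ 2) := by
    apply mul_le_mul_of_nonneg_right _ (by positivity)
    rw [le_div_iff₀ (by positivity)]
    nlinarith
  have hAα : α * ((inner ℝ (gf X) V : ℝ) + h (X + V) - h X)
      ≤ α * (-(1 / (2 * t)) * (2 * ‖V‖ ^ 2)) := mul_le_mul_of_nonneg_left keyA hα.le
  have efin : -(α / (2 * t)) * ‖V‖ ^ 2
      = α * (-(1 / (2 * t)) * (2 * ‖V‖ ^ 2)) + (1 / (2 * t)) * (α * ‖V‖ ^ 2) := by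
    field_simp; ring
  rw [efin]
  have eC : G * (M₂ * (α * ‖V‖) ^ 2) + L / 2 * (M₁ * (α * ‖V‖)) ^ 2
      + Lh * (M₂ * (α * ‖V‖) ^ 2) = C * α * (α * ‖V‖ ^ 2) := by
    rw [hC]; ring
  linarith [fb, hb, hcx2, ib, lb, hCa, hAα, innsplit, innd, eC]
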